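/- arXiv:2203.08659 — 6 statements merged into one kernel-verified Lean document; each statement's English description precedes it below -/
import Mathlib

section
/- If a flow map φ : ℝ≥0 × ℝ^N → ℝ^N is monotone (x ⪰ y implies φ(t,x) ⪰ φ(t,y) for all t, where ⪰ denotes componentwise inequality) and translation invariant (φ(t, x + δ·𝟏) = φ(t,x) + δ·𝟏 for all δ ∈ ℝ, where 𝟏 is the all-ones vector), then φ is weakly contracting in the infinity norm: ‖φ(t,x) − φ(t,y)‖_∞ ≤ ‖x − y‖_∞ for all t ≥ 0 and all x, y ∈ ℝ^N. -/
/-- Monotone and translation-invariant flows are weakly contracting in the sup norm. -/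
theorem weak_contraction_of_monotone_translation_invariant
    (N : ℕ) (hN : 1 ≤ N)
    (φ : ℝ → (Fin N → ℝ) → (Fin N → ℝ))
    (hmono : ∀ t : ℝ, 0 ≤ t → ∀ x y : Fin N → ℝ,
      (∀ i, y i ≤ x i) → ∀ i, φ t y i ≤ φ t x i)
    (htrans : ∀ t : ℝ, 0 ≤ t → ∀ (x : Fin N → ℝ) (δ : ℝ),
      φ t (fun i => x i + δ) = fun i => φ t x i + δ) :
    ∀ t : ℝ, 0 ≤ t → ∀ x y : Fin N → ℝ, ‖φ t x - φ t y‖ ≤ ‖x - y‖ := by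
  intro t ht x y
  set c := ‖x - y‖ with hc
  have hkey : ∀ i, |x i - y i| ≤ c := by
    intro i
    have := norm_le_pi_norm (x - y) i
    simpa using this
  have h1 : ∀ i, φ t x i ≤ φ t y i + c := by
    have hle : ∀ i, x i ≤ y i + c := fun i => by
      have := (abs_le.mp (hkey i)).2; linarith
    have := hmono t ht (fun i => y i + c) x hle
    intro i
    have h2 := this i
    rwa [htrans t ht y c] at h2
  have h2 : ∀ i, φ t y i ≤ φ t x i + c := by
    have hle : ∀ i, y i ≤ x i + c := fun i => by
      have := (abs_le.mp (hkey i)).1; linarith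
    have := hmono t ht (fun i => x i + c) y hle
    intro i
    have h2 := this i
    rwa [htrans t ht x c] at h2
  have : ∀ i, |(φ t x - φ t y) i| ≤ c := by
    intro i
    rw [Pi.sub_apply, abs_le]
    constructor <;> [linarith [h2 i]; linarith [h1 i]]
  exact pi_norm_le_iff_of_nonneg (norm_nonneg _) |>.mpr fun i => by
    simpa using this i
end

section
/- (Discrete-time necessity.) Let T = {1,…,T} be a finite time horizon, and suppose d : T → [0,∞) is feasible for the fleet: there exist u_j : T → ℝ with 0 ≤ u_j(k) ≤ P̄_j for all k, u_j(k) = 0 for k ∉ A_j, ∑_{j∈N} u_j(k) = d(k) for all k, and ∑_{k∈T} u_j(k) ≤ P̄_j · x_j(0) for each j. Then for every subset W ⊆ T, ∑_{k∈W} d(k) ≤ ∑_{j∈N} min{card(A_j ∩ W), x_j(0)} · P̄_j. -/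
/-- Discrete-time necessity of the aggregate flexibility constraints. -/
theorem discrete_aggregate_constraints_necessary
    {ι : Type*} [Fintype ι] [DecidableEq ℕ] (T : ℕ)
    (P x0 : ι → ℝ) (hP : ∀ j, 0 < P j) (hx0 : ∀ j, 0 ≤ x0 j)
    (A : ι → Finset ℕ) (hAsub : ∀ j, A j ⊆ Finset.Icc 1 T)
    (d : ℕ → ℝ) (u : ι → ℕ → ℝ)
    (hubd : ∀ j, ∀ k ∈ Finset.Icc 1 T, 0 ≤ u j k ∧ u j k ≤ P j)
    (havail : ∀ j, ∀ k ∈ Finset.Icc 1 T, k ∉ A j → u j k = 0)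
    (hsum : ∀ k ∈ Finset.Icc 1 T, ∑ j, u j k = d k)
    (henergy : ∀ j, ∑ k ∈ Finset.Icc 1 T, u j k ≤ P j * x0 j) :
    ∀ W ⊆ Finset.Icc 1 T,
      ∑ k ∈ W, d k ≤ ∑ j, min ((A j ∩ W).card : ℝ) (x0 j) * P j := by
  intro W hW
  have h1 : ∑ k ∈ W, d k = ∑ j, ∑ k ∈ W, u j k := by
    rw [Finset.sum_comm]
    exact Finset.sum_congr rfl fun k hk => (hsum k (hW hk)).symm
  rw [h1]
  apply Finset.sum_le_sum
  intro j _
  have hrestrict : ∑ k ∈ W, u j k = ∑ k ∈ A j ∩ W, u j k := by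
    rw [Finset.sum_subset (Finset.inter_subset_right)]
    intro k hk hk'
    exact havail j k (hW hk) (fun h => hk' (Finset.mem_inter.mpr ⟨h, hk⟩))
  rw [hrestrict]
  rw [min_mul_of_nonneg _ _ (hP j).le]
  apply le_min
  · calc ∑ k ∈ A j ∩ W, u j k ≤ ∑ k ∈ A j ∩ W, P j :=
          Finset.sum_le_sum fun k hk =>
            (hubd j k (hW (Finset.mem_inter.mp hk).2)).2
      _ = ((A j ∩ W).card : ℝ) * P j := by
          rw [Finset.sum_const, nsmul_eq_mul]
  · calc ∑ k ∈ A j ∩ W, u j k ≤ ∑ k ∈ Finset.Icc 1 T, u j k := by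
          apply Finset.sum_le_sum_of_subset_of_nonneg
          · exact fun k hk => hAsub j (Finset.mem_inter.mp hk).1
          · exact fun k hk _ => (hubd j k hk).1
      _ ≤ P j * x0 j := henergy j
      _ = x0 j * P j := mul_comm _ _
end

section
/- (No causal dispatch policy exists.) With the two-battery fleet of the previous example (P̄₁ = P̄₂ = 1, E₁(0) = 3, E₂(0) = 6, A₁ = [0,5], A₂ = [0,12], T = [0,12]), define d₁(t) = 1 on [0,3] ∪ [5,11], 0 elsewhere, and d₂(t) = 2 on [2,5], 1 on [0,2] ∪ [5,6], 0 elsewhere. Both d₁ and d₂ are feasible and coincide on [0,2]. However, every feasible dispatch of d₁ has ∫_0^2 u₁(t) dt = 2, while every feasible dispatch of d₂ has ∫_0^2 u₂(t) dt = 2 (hence ∫_0^2 u₁ dt = 0). Consequently, there is no single causal policy (a map assigning u(t) as a function only of the demand restricted to [0,t] and the current state) that dispatches every feasible demand signal for this fleet. -/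
open MeasureTheory

/-- A feasible dispatch of demand `d` over `T=[0,12]` for the two-device fleet with
unit rated powers, energies 3 and 6, availability `A₁=[0,5]`, `A₂=[0,12]`. -/
def TwoBatFeasible (d u₁ u₂ : ℝ → ℝ) : Prop :=
  Measurable u₁ ∧ Measurable u₂ ∧
  (∀ t ∈ Set.Icc (0 : ℝ) 12, 0 ≤ u₁ t ∧ u₁ t ≤ 1 ∧ 0 ≤ u₂ t ∧ u₂ t ≤ 1) ∧
  (∀ t ∈ Set.Icc (0 : ℝ) 12, 5 < t → u₁ t = 0) ∧
  (∀ t ∈ Set.Icc (0 : ℝ) 12, u₁ t + u₂ t = d t) ∧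
  (∫ t in Set.Icc (0 : ℝ) 12, u₁ t) ≤ 3 ∧
  (∫ t in Set.Icc (0 : ℝ) 12, u₂ t) ≤ 6

/-- `d₁ = 1` on `[0,3] ∪ [5,11]`, `0` elsewhere. -/
noncomputable def dOne : ℝ → ℝ :=
  (Set.Icc (0 : ℝ) 3 ∪ Set.Icc (5 : ℝ) 11).indicator fun _ => 1

/-- `d₂ = 1` on `[0,2] ∪ (5,6]`, `2` on `(2,5]`, `0` elsewhere. -/
noncomputable def dTwo : ℝ → ℝ := fun t =>
  (Set.Icc (0 : ℝ) 2 ∪ Set.Ioc (5 : ℝ) 6).indicator (fun _ => (1 : ℝ)) t +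
  (Set.Ioc (2 : ℝ) 5).indicator (fun _ => (2 : ℝ)) t

/-- A policy is causal if its output on `[0,T]` depends only on the demand restricted
to `[0,T]`. -/
def Causal (Pol : (ℝ → ℝ) → ℝ → ℝ × ℝ) : Prop :=
  ∀ da db : ℝ → ℝ, ∀ T : ℝ, (∀ s ∈ Set.Icc (0 : ℝ) T, da s = db s) →
    ∀ s ∈ Set.Icc (0 : ℝ) T, Pol da s = Pol db s

section Aux

/-- Integrability of a `[0,1]`-valued measurable function on a measurable subset of `[0,12]`. -/
lemma aux_integrableOn (u : ℝ → ℝ) (hm : Measurable u)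
    (hb : ∀ t ∈ Set.Icc (0 : ℝ) 12, 0 ≤ u t ∧ u t ≤ 1)
    {s : Set ℝ} (hs : MeasurableSet s) (hsub : s ⊆ Set.Icc (0 : ℝ) 12) :
    IntegrableOn u s := by
  apply Measure.integrableOn_of_bounded (M := 1)
  · exact ((measure_mono hsub).trans_lt (by simp [Real.volume_Icc])).ne
  · exact hm.aestronglyMeasurable
  · refine (ae_restrict_iff' hs).2 (Filter.Eventually.of_forall fun t ht => ?_)
    have := hb t (hsub ht)
    rw [Real.norm_eq_abs, abs_le]
    constructor <;> linarith [this.1, this.2]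

/-- The key rigidity lemma: if `u` is `[0,1]`-valued on `[0,12]`, equals `1` on `(a,b]`
with `2 ≤ a ≤ b ≤ 12`, and its total integral over `[0,12]` is at most `b - a`, then its
integral over `[0,2]` vanishes. -/
lemma aux_zero_front (u : ℝ → ℝ) (hm : Measurable u)
    (hb : ∀ t ∈ Set.Icc (0 : ℝ) 12, 0 ≤ u t ∧ u t ≤ 1)
    {a b : ℝ} (h2a : 2 ≤ a) (hab : a ≤ b) (hb12 : b ≤ 12)
    (hone : ∀ t ∈ Set.Ioc a b, u t = 1)
    (hbud : (∫ t in Set.Icc (0 : ℝ) 12, u t) ≤ b - a) :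
    (∫ t in Set.Icc (0 : ℝ) 2, u t) = 0 := by
  have hsub1 : Set.Icc (0:ℝ) 2 ⊆ Set.Icc (0:ℝ) 12 := Set.Icc_subset_Icc le_rfl (by norm_num)
  have hsub2 : Set.Ioc (2:ℝ) 12 ⊆ Set.Icc (0:ℝ) 12 :=
    Set.Ioc_subset_Icc_self.trans (Set.Icc_subset_Icc (by norm_num) le_rfl)
  have hsub3 : Set.Ioc a b ⊆ Set.Ioc (2:ℝ) 12 := Set.Ioc_subset_Ioc h2a hb12
  have hi1 : IntegrableOn u (Set.Icc (0:ℝ) 2) := aux_integrableOn u hm hb measurableSet_Icc hsub1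
  have hi2 : IntegrableOn u (Set.Ioc (2:ℝ) 12) := aux_integrableOn u hm hb measurableSet_Ioc hsub2
  -- integral over (a,b] equals b - a
  have hIab : (∫ t in Set.Ioc a b, u t) = b - a := by
    rw [setIntegral_congr_fun measurableSet_Ioc hone]
    simp [Real.volume_Ioc, ENNReal.toReal_ofReal (by linarith : (0:ℝ) ≤ b - a), hab]
  -- split the budget integral
  have hsplit : (∫ t in Set.Icc (0:ℝ) 12, u t) =
      (∫ t in Set.Icc (0:ℝ) 2, u t) + (∫ t in Set.Ioc (2:ℝ) 12, u t) := by
    rw [← setIntegral_union (by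
        rw [Set.disjoint_left]; rintro x ⟨_, hx2⟩ ⟨hx2', _⟩; linarith) measurableSet_Ioc hi1 hi2,
      Set.Icc_union_Ioc_eq_Icc (by norm_num) (by norm_num)]
  have hmono : (∫ t in Set.Ioc a b, u t) ≤ (∫ t in Set.Ioc (2:ℝ) 12, u t) := by
    apply setIntegral_mono_set hi2
    · refine (ae_restrict_iff' measurableSet_Ioc).2 (Filter.Eventually.of_forall fun t ht => ?_)
      exact (hb t (hsub2 ht)).1
    · exact HasSubset.Subset.eventuallyLE hsub3
  have hnonneg : 0 ≤ (∫ t in Set.Icc (0:ℝ) 2, u t) := by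
    apply setIntegral_nonneg measurableSet_Icc
    exact fun t ht => (hb t (hsub1 ht)).1
  have : (∫ t in Set.Icc (0:ℝ) 2, u t) ≤ 0 := by
    have := hsplit ▸ hbud
    linarith [hIab ▸ hmono]
  linarith

end Aux

/-- No causal policy can dispatch every feasible demand signal for this fleet:
`d₁` and `d₂` are both feasible and agree on `[0,2]`, yet every feasible dispatch of
`d₁` takes 2 units of energy from device 1 on `[0,2]`, while every feasible dispatch of
`d₂` takes 2 units from device 2 (and none from device 1) there. -/
theorem no_causal_dispatch_policy :
    (∃ u₁ u₂, TwoBatFeasible dOne u₁ u₂) ∧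
    (∃ u₁ u₂, TwoBatFeasible dTwo u₁ u₂) ∧
    (∀ t ∈ Set.Icc (0 : ℝ) 2, dOne t = dTwo t) ∧
    (∀ u₁ u₂, TwoBatFeasible dOne u₁ u₂ → (∫ t in (0:ℝ)..2, u₁ t) = 2) ∧
    (∀ u₁ u₂, TwoBatFeasible dTwo u₁ u₂ →
      (∫ t in (0:ℝ)..2, u₂ t) = 2 ∧ (∫ t in (0:ℝ)..2, u₁ t) = 0) ∧
    ¬ ∃ Pol : (ℝ → ℝ) → ℝ → ℝ × ℝ, Causal Pol ∧
        ∀ d : ℝ → ℝ, (∃ u₁ u₂, TwoBatFeasible d u₁ u₂) →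
          TwoBatFeasible d (fun t => (Pol d t).1) (fun t => (Pol d t).2) := by
  -- feasibility of d₁
  have feas1 : ∃ u₁ u₂, TwoBatFeasible dOne u₁ u₂ := by
    refine ⟨(Set.Icc (0:ℝ) 3).indicator (fun _ => 1),
            (Set.Icc (5:ℝ) 11).indicator (fun _ => 1), ?_, ?_, ?_, ?_, ?_, ?_, ?_⟩
    · exact measurable_const.indicator measurableSet_Icc
    · exact measurable_const.indicator measurableSet_Icc
    · intro t _
      simp only [Set.indicator_apply]
      split_ifs <;> norm_num
    · intro t ht h5
      simp only [Set.indicator_apply, Set.mem_Icc]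
      split_ifs with h
      · linarith [h.2]
      · rfl
    · intro t ht
      unfold dOne
      rw [Set.indicator_union_of_disjoint (by
        rw [Set.disjoint_left]; intro x hx hx'
        exact absurd hx'.1 (by linarith [hx.2]))]
    · rw [setIntegral_indicator measurableSet_Icc,
        Set.inter_eq_right.2 (Set.Icc_subset_Icc le_rfl (by norm_num)),
        setIntegral_const]
      simp [Real.volume_Icc]
      try norm_num
    · rw [setIntegral_indicator measurableSet_Icc,
        Set.inter_eq_right.2 (Set.Icc_subset_Icc (by norm_num) (by norm_num)),
        setIntegral_const]
      simp [Real.volume_Icc]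
      try norm_num
  -- feasibility of d₂
  have feas2 : ∃ u₁ u₂, TwoBatFeasible dTwo u₁ u₂ := by
    refine ⟨(Set.Ioc (2:ℝ) 5).indicator (fun _ => 1),
            (Set.Icc (0:ℝ) 6).indicator (fun _ => 1), ?_, ?_, ?_, ?_, ?_, ?_, ?_⟩
    · exact measurable_const.indicator measurableSet_Ioc
    · exact measurable_const.indicator measurableSet_Icc
    · intro t _
      simp only [Set.indicator_apply]
      split_ifs <;> norm_num
    · intro t ht h5
      simp only [Set.indicator_apply, Set.mem_Ioc]
      split_ifs with h
      · linarith [h.2]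
      · rfl
    · intro t ht
      obtain ⟨h0, h12⟩ := ht
      unfold dTwo
      by_cases h2 : t ≤ 2
      · rw [Set.indicator_of_notMem (fun h => by exact absurd h.1 (by linarith)),
          Set.indicator_of_mem (show t ∈ Set.Icc (0:ℝ) 6 from ⟨h0, by linarith⟩),
          Set.indicator_of_mem (show t ∈ Set.Icc (0:ℝ) 2 ∪ Set.Ioc (5:ℝ) 6 from Or.inl ⟨h0, h2⟩),
          Set.indicator_of_notMem (fun h => by exact absurd h.1 (by linarith))]
        try norm_num
      · push_neg at h2
        by_cases h5 : t ≤ 5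
        · rw [Set.indicator_of_mem (show t ∈ Set.Ioc (2:ℝ) 5 from ⟨h2, h5⟩),
            Set.indicator_of_mem (show t ∈ Set.Icc (0:ℝ) 6 from ⟨h0, by linarith⟩),
            Set.indicator_of_notMem (fun h => by
              rcases h with h | h
              · exact absurd h.2 (by linarith)
              · exact absurd h.1 (by linarith)),
            Set.indicator_of_mem (show t ∈ Set.Ioc (2:ℝ) 5 from ⟨h2, h5⟩)]
          try norm_num
        · push_neg at h5
          by_cases h6 : t ≤ 6
          · rw [Set.indicator_of_notMem (fun h => by exact absurd h.2 (by linarith)),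
              Set.indicator_of_mem (show t ∈ Set.Icc (0:ℝ) 6 from ⟨h0, h6⟩),
              Set.indicator_of_mem (show t ∈ Set.Icc (0:ℝ) 2 ∪ Set.Ioc (5:ℝ) 6 from Or.inr ⟨h5, h6⟩),
              Set.indicator_of_notMem (fun h => by exact absurd h.2 (by linarith))]
            try norm_num
          · push_neg at h6
            rw [Set.indicator_of_notMem (fun h => by exact absurd h.2 (by linarith)),
              Set.indicator_of_notMem (fun h => by exact absurd h.2 (by linarith)),
              Set.indicator_of_notMem (fun h => by
                rcases h with h | h
                · exact absurd h.2 (by linarith)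
                · exact absurd h.2 (by linarith)),
              Set.indicator_of_notMem (fun h => by exact absurd h.2 (by linarith))]
            try norm_num
    · rw [setIntegral_indicator measurableSet_Ioc,
        Set.inter_eq_right.2 (Set.Ioc_subset_Icc_self.trans (Set.Icc_subset_Icc (by norm_num) (by norm_num))),
        setIntegral_const]
      simp [Real.volume_Ioc]
      try norm_num
    · rw [setIntegral_indicator measurableSet_Icc,
        Set.inter_eq_right.2 (Set.Icc_subset_Icc le_rfl (by norm_num)),
        setIntegral_const]
      simp [Real.volume_Icc]
      try norm_num
  -- agreement on [0,2]
  have hagree : ∀ t ∈ Set.Icc (0 : ℝ) 2, dOne t = dTwo t := by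
    intro t ht
    obtain ⟨h0, h2⟩ := ht
    unfold dOne dTwo
    rw [Set.indicator_of_mem (by left; exact ⟨h0, by linarith⟩),
      Set.indicator_of_mem (by left; exact ⟨h0, h2⟩),
      Set.indicator_of_notMem (by simp only [Set.mem_Ioc]; push_neg; intro h; linarith)]
    norm_num
  -- rigidity for d₁
  have rig1 : ∀ u₁ u₂, TwoBatFeasible dOne u₁ u₂ → (∫ t in (0:ℝ)..2, u₁ t) = 2 := by
    intro u₁ u₂ ⟨hm1, hm2, hb, hav, hsum, hbud1, hbud2⟩
    have hb2 : ∀ t ∈ Set.Icc (0 : ℝ) 12, 0 ≤ u₂ t ∧ u₂ t ≤ 1 := fun t ht =>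
      ⟨(hb t ht).2.2.1, (hb t ht).2.2.2⟩
    have hone : ∀ t ∈ Set.Ioc (5:ℝ) 11, u₂ t = 1 := by
      intro t ht
      have htI : t ∈ Set.Icc (0:ℝ) 12 := ⟨by linarith [ht.1], by linarith [ht.2]⟩
      have h1 := hav t htI ht.1
      have h2 := hsum t htI
      have : dOne t = 1 := by
        unfold dOne
        exact Set.indicator_of_mem (by right; exact ⟨le_of_lt ht.1, ht.2⟩) _
      rw [this] at h2; linarith
    have hz : (∫ t in Set.Icc (0:ℝ) 2, u₂ t) = 0 :=
      aux_zero_front u₂ hm2 hb2 (by norm_num) (by norm_num) (by norm_num) hone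
        (by norm_num at hbud2 ⊢; linarith)
    -- u₁ = 1 - u₂ on [0,2]
    have hsub1 : Set.Icc (0:ℝ) 2 ⊆ Set.Icc (0:ℝ) 12 := Set.Icc_subset_Icc le_rfl (by norm_num)
    have heq : ∀ t ∈ Set.Icc (0:ℝ) 2, u₁ t = 1 - u₂ t := by
      intro t ht
      have h2 := hsum t (hsub1 ht)
      have : dOne t = 1 := by
        unfold dOne
        exact Set.indicator_of_mem (by left; exact ⟨ht.1, by linarith [ht.2]⟩) _
      rw [this] at h2; linarith
    have hi2 : IntegrableOn u₂ (Set.Icc (0:ℝ) 2) :=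
      aux_integrableOn u₂ hm2 hb2 measurableSet_Icc hsub1
    rw [intervalIntegral.integral_of_le (by norm_num : (0:ℝ) ≤ 2),
      ← integral_Icc_eq_integral_Ioc, setIntegral_congr_fun measurableSet_Icc heq,
      integral_sub (μ := volume.restrict (Set.Icc (0:ℝ) 2)) ((show IntegrableOn (fun _ => (1:ℝ)) (Set.Icc (0:ℝ) 2) volume from integrableOn_const (by simp [Real.volume_Icc]))) hi2, hz,
      setIntegral_const]
    simp [Real.volume_Icc]
  -- rigidity for d₂
  have rig2 : ∀ u₁ u₂, TwoBatFeasible dTwo u₁ u₂ →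
      (∫ t in (0:ℝ)..2, u₂ t) = 2 ∧ (∫ t in (0:ℝ)..2, u₁ t) = 0 := by
    intro u₁ u₂ ⟨hm1, hm2, hb, hav, hsum, hbud1, hbud2⟩
    have hb1 : ∀ t ∈ Set.Icc (0 : ℝ) 12, 0 ≤ u₁ t ∧ u₁ t ≤ 1 := fun t ht =>
      ⟨(hb t ht).1, (hb t ht).2.1⟩
    have hone : ∀ t ∈ Set.Ioc (2:ℝ) 5, u₁ t = 1 := by
      intro t ht
      have htI : t ∈ Set.Icc (0:ℝ) 12 := ⟨by linarith [ht.1], by linarith [ht.2]⟩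
      have h2 := hsum t htI
      have hd : dTwo t = 2 := by
        unfold dTwo
        rw [Set.indicator_of_mem ht, Set.indicator_of_notMem (by
          simp only [Set.mem_union, Set.mem_Icc, Set.mem_Ioc]
          push_neg
          exact ⟨fun _ => by linarith [ht.1], fun h => by linarith [ht.2]⟩)]
        try norm_num
      rw [hd] at h2
      have := (hb t htI).2.1
      have := (hb t htI).2.2.2
      linarith
    have hz : (∫ t in Set.Icc (0:ℝ) 2, u₁ t) = 0 :=
      aux_zero_front u₁ hm1 hb1 le_rfl (by norm_num) (by norm_num) hone
        (by norm_num at hbud1 ⊢; linarith)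
    have hsub1 : Set.Icc (0:ℝ) 2 ⊆ Set.Icc (0:ℝ) 12 := Set.Icc_subset_Icc le_rfl (by norm_num)
    have heq : ∀ t ∈ Set.Icc (0:ℝ) 2, u₂ t = 1 - u₁ t := by
      intro t ht
      have h2 := hsum t (hsub1 ht)
      have hd : dTwo t = 1 := by
        unfold dTwo
        rw [Set.indicator_of_mem (by left; exact ht), Set.indicator_of_notMem (by
          simp only [Set.mem_Ioc]; push_neg; intro h; linarith [ht.2])]
        try norm_num
      rw [hd] at h2; linarith
    have hi1 : IntegrableOn u₁ (Set.Icc (0:ℝ) 2) :=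
      aux_integrableOn u₁ hm1 hb1 measurableSet_Icc hsub1
    constructor
    · rw [intervalIntegral.integral_of_le (by norm_num : (0:ℝ) ≤ 2),
        ← integral_Icc_eq_integral_Ioc, setIntegral_congr_fun measurableSet_Icc heq,
        integral_sub (μ := volume.restrict (Set.Icc (0:ℝ) 2)) ((show IntegrableOn (fun _ => (1:ℝ)) (Set.Icc (0:ℝ) 2) volume from integrableOn_const (by simp [Real.volume_Icc]))) hi1, hz,
        setIntegral_const]
      simp [Real.volume_Icc]
    · rw [intervalIntegral.integral_of_le (by norm_num : (0:ℝ) ≤ 2),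
        ← integral_Icc_eq_integral_Ioc]
      exact hz
  refine ⟨feas1, feas2, hagree, rig1, rig2, ?_⟩
  rintro ⟨Pol, hc, hall⟩
  have h1 := rig1 _ _ (hall dOne feas1)
  have h2 := (rig2 _ _ (hall dTwo feas2)).2
  have hEq : ∀ s ∈ Set.Icc (0:ℝ) 2, Pol dOne s = Pol dTwo s := hc dOne dTwo 2 hagree
  have : (∫ t in (0:ℝ)..2, (Pol dOne t).1) = (∫ t in (0:ℝ)..2, (Pol dTwo t).1) := by
    apply intervalIntegral.integral_congr
    intro s hs
    rw [Set.uIcc_of_le (by norm_num : (0:ℝ) ≤ 2)] at hs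
    show (Pol dOne s).1 = (Pol dTwo s).1
    rw [hEq s hs]
  rw [h1, h2] at this
  norm_num at this
end

section
/- (Sufficiency of aggregate constraints in a simplified discrete homogeneous setting.) Let T = {1,…,T} and let N devices have unit rated power P̄_j = 1, full availability A_j = T, and initial energies x_j(0) ≥ 0. A demand d : T → [0,∞) is feasible if (and only if) for every subset W ⊆ T, ∑_{k∈W} d(k) ≤ ∑_{j=1}^N min{card(W), x_j(0)}. -/
/-- Key per-device inequality in the water-filling step, case `τ < m`. -/
lemma waterfill_step (m τ x : ℝ) (hx : 0 ≤ x) (hτ : 0 ≤ τ) (hτm : τ < m) :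
    min (m + 1) x ≤ min m (x - min 1 (max 0 (x - τ))) + min 1 (max 0 (x - τ)) := by
  rcases le_or_gt x τ with h | h
  · -- a = 0, y = x ≤ τ < m
    have : max 0 (x - τ) = 0 := max_eq_left (by linarith)
    rw [this]
    norm_num
    linarith
  · rcases le_or_gt 1 (x - τ) with h1 | h1
    · -- a = 1, y = x - 1
      have hm : max 0 (x - τ) = x - τ := max_eq_right (by linarith)
      have : min 1 (max 0 (x - τ)) = 1 := by rw [hm]; exact min_eq_left h1
      rw [this]
      rcases le_or_gt x (m + 1) with h2 | h2
      · have := min_le_right (m) (x - 1)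
        have := min_le_left (m) (x - 1)
        have h3 : min (m + 1) x = x := min_eq_right h2
        have h4 : min m (x - 1) = x - 1 := min_eq_right (by linarith)
        rw [h3, h4]; ring_nf; exact le_refl _
      · have h3 : min (m + 1) x = m + 1 := min_eq_left (by linarith)
        have h4 : min m (x - 1) = m := min_eq_left (by linarith)
        rw [h3, h4]
    · -- a = x - τ, y = τ
      have hm : max 0 (x - τ) = x - τ := max_eq_right (by linarith)
      have ha : min 1 (max 0 (x - τ)) = x - τ := by rw [hm]; exact min_eq_right h1.le
      rw [ha]
      have : x - (x - τ) = τ := by ring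
      rw [this]
      have h2 : min m τ = τ := min_eq_right hτm.le
      rw [h2]
      have := min_le_right (m + 1) x
      linarith

/-- Sufficiency, proved by induction on `T`, peeling the last slot via water-filling. -/
lemma discrete_homogeneous_sufficiency
    (N : ℕ) (d : ℕ → ℝ) :
    ∀ T : ℕ, ∀ x0 : Fin N → ℝ, (∀ j, 0 ≤ x0 j) →
    (∀ k ∈ Finset.Icc 1 T, 0 ≤ d k) →
    (∀ W ⊆ Finset.Icc 1 T, ∑ k ∈ W, d k ≤ ∑ j, min (W.card : ℝ) (x0 j)) →
    (∃ u : Fin N → ℕ → ℝ,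
      (∀ j, ∀ k ∈ Finset.Icc 1 T, 0 ≤ u j k ∧ u j k ≤ 1) ∧
      (∀ k ∈ Finset.Icc 1 T, ∑ j, u j k = d k) ∧
      (∀ j, ∑ k ∈ Finset.Icc 1 T, u j k ≤ x0 j)) := by
  intro T
  induction T with
  | zero =>
    intro x0 hx0 _ _
    refine ⟨fun _ _ => 0, ?_, ?_, ?_⟩ <;> simp [hx0]
  | succ T ih =>
    intro x0 hx0 hd hW
    -- the single-slot window {T+1}
    have hTmem : T + 1 ∈ Finset.Icc 1 (T + 1) := by simp
    have hsingle : d (T + 1) ≤ ∑ j, min 1 (x0 j) := by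
      have := hW {T + 1} (by simpa using hTmem)
      simpa using this
    -- water-filling function
    set g : ℝ → ℝ := fun τ => ∑ j, min 1 (max 0 (x0 j - τ)) with hg
    have hgcont : Continuous g := by
      apply continuous_finset_sum
      intro j _
      exact continuous_const.min (continuous_const.max (continuous_const.sub continuous_id))
    set M : ℝ := ∑ j, x0 j with hM
    have hM0 : 0 ≤ M := Finset.sum_nonneg fun j _ => hx0 j
    have hxM : ∀ j, x0 j ≤ M := by
      intro j
      exact Finset.single_le_sum (fun i _ => hx0 i) (Finset.mem_univ j)
    have hgM : g M = 0 := by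
      apply Finset.sum_eq_zero
      intro j _
      have : max 0 (x0 j - M) = 0 := max_eq_left (by linarith [hxM j])
      rw [this]; simp
    have hg0 : d (T + 1) ≤ g 0 := by
      have : g 0 = ∑ j, min 1 (x0 j) := by
        apply Finset.sum_congr rfl
        intro j _
        rw [sub_zero, max_eq_right (hx0 j)]
      rw [this]; exact hsingle
    have hd0 : 0 ≤ d (T + 1) := hd _ hTmem
    -- find τ with g τ = d (T+1)
    obtain ⟨τ, hτmem, hτ⟩ :
        ∃ τ ∈ Set.Icc (0 : ℝ) M, g τ = d (T + 1) := by
      have h := intermediate_value_Icc' hM0 hgcont.continuousOn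
      have hin : d (T + 1) ∈ Set.Icc (g M) (g 0) := ⟨by rw [hgM]; exact hd0, hg0⟩
      obtain ⟨τ, hτ1, hτ2⟩ := h hin
      exact ⟨τ, hτ1, hτ2⟩
    have hτ0 : 0 ≤ τ := hτmem.1
    -- allocation at slot T+1
    set a : Fin N → ℝ := fun j => min 1 (max 0 (x0 j - τ)) with ha
    have ha0 : ∀ j, 0 ≤ a j := fun j => le_min zero_le_one (le_max_left _ _)
    have ha1 : ∀ j, a j ≤ 1 := fun j => min_le_left _ _
    have hax : ∀ j, a j ≤ x0 j := by
      intro j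
      calc a j ≤ max 0 (x0 j - τ) := min_le_right _ _
        _ ≤ x0 j := max_le (hx0 j) (by linarith)
    have hasum : ∑ j, a j = d (T + 1) := hτ
    set y : Fin N → ℝ := fun j => x0 j - a j with hy
    have hy0 : ∀ j, 0 ≤ y j := fun j => by simp [hy]; exact hax j
    -- window conditions for the reduced problem
    have hW' : ∀ W ⊆ Finset.Icc 1 T, ∑ k ∈ W, d k ≤ ∑ j, min (W.card : ℝ) (y j) := by
      intro W hWs
      rcases le_or_gt (W.card : ℝ) τ with hcase | hcase
      · -- τ ≥ m : use the original bound with W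
        have h1 : ∑ k ∈ W, d k ≤ ∑ j, min (W.card : ℝ) (x0 j) :=
          hW W (hWs.trans (Finset.Icc_subset_Icc_right (by omega)))
        refine h1.trans (Finset.sum_le_sum ?_)
        intro j _
        rcases le_or_gt (x0 j) τ with h | h
        · have haj : a j = 0 := by
            simp only [ha]
            rw [max_eq_left (by linarith)]; simp
          simp [hy, haj]
        · have hym : (W.card : ℝ) ≤ y j := by
            have : y j = max (x0 j - 1) τ := by
              simp only [hy, ha]
              rw [max_eq_right (by linarith)]
              rcases le_or_gt 1 (x0 j - τ) with h1 | h1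
              · rw [min_eq_left h1, max_eq_left (by linarith)]
              · rw [min_eq_right h1.le, max_eq_right (by linarith)]
                ring
            rw [this]
            exact hcase.trans (le_max_right _ _)
          calc min (W.card : ℝ) (x0 j) ≤ (W.card : ℝ) := min_le_left _ _
            _ = min (W.card : ℝ) (y j) := (min_eq_left hym).symm
      · -- τ < m : use the window W ∪ {T+1}
        have hTnot : T + 1 ∉ W := by
          intro h
          have := hWs h
          simp at this
        have hsub : insert (T + 1) W ⊆ Finset.Icc 1 (T + 1) := by
          intro k hk
          rcases Finset.mem_insert.mp hk with h | h
          · subst h; exact hTmem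
          · exact Finset.Icc_subset_Icc_right (by omega) (hWs h)
        have hcard : ((insert (T + 1) W).card : ℝ) = (W.card : ℝ) + 1 := by
          rw [Finset.card_insert_of_notMem hTnot]
          push_cast; ring
        have h2 := hW (insert (T + 1) W) hsub
        rw [Finset.sum_insert hTnot, hcard] at h2
        have h3 : ∑ j, min ((W.card : ℝ) + 1) (x0 j) ≤
            ∑ j, (min (W.card : ℝ) (y j) + a j) := by
          apply Finset.sum_le_sum
          intro j _
          exact waterfill_step (W.card : ℝ) τ (x0 j) (hx0 j) hτ0 hcase
        rw [Finset.sum_add_distrib, hasum] at h3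
        linarith
    -- apply induction hypothesis
    obtain ⟨u', hu'1, hu'2, hu'3⟩ := ih y hy0
      (fun k hk => hd k (Finset.mem_of_subset (Finset.Icc_subset_Icc_right (by omega)) hk))
      hW'
    refine ⟨fun j k => if k = T + 1 then a j else u' j k, ?_, ?_, ?_⟩
    · intro j k hk
      by_cases h : k = T + 1
      · simp [h]; exact ⟨ha0 j, ha1 j⟩
      · simp only [if_neg h]
        apply hu'1
        simp at hk ⊢
        omega
    · intro k hk
      by_cases h : k = T + 1
      · simp [h, hasum]
      · simp only [if_neg h]
        apply hu'2
        simp at hk ⊢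
        omega
    · intro j
      have hins : Finset.Icc 1 (T + 1) = insert (T + 1) (Finset.Icc 1 T) := by
        ext k
        simp only [Finset.mem_Icc, Finset.mem_insert]
        omega
      rw [hins, Finset.sum_insert (by simp)]
      simp only [if_pos rfl, if_true]
      have : ∑ k ∈ Finset.Icc 1 T, (if k = T + 1 then a j else u' j k)
          = ∑ k ∈ Finset.Icc 1 T, u' j k := by
        apply Finset.sum_congr rfl
        intro k hk
        simp at hk
        rw [if_neg (by omega)]
      rw [this]
      have := hu'3 j
      simp only [hy] at this
      linarith

/-- Sufficiency (and necessity) of the aggregate constraints in the discrete homogeneous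
full-availability setting: `d` is feasible iff for every window `W`,
`∑_{k∈W} d(k) ≤ ∑_j min{card W, x_j(0)}`. -/
theorem discrete_homogeneous_feasibility_iff
    (N T : ℕ) (hN : 0 < N) (x0 : Fin N → ℝ) (hx0 : ∀ j, 0 ≤ x0 j)
    (d : ℕ → ℝ) (hd : ∀ k ∈ Finset.Icc 1 T, 0 ≤ d k) :
    (∃ u : Fin N → ℕ → ℝ,
      (∀ j, ∀ k ∈ Finset.Icc 1 T, 0 ≤ u j k ∧ u j k ≤ 1) ∧
      (∀ k ∈ Finset.Icc 1 T, ∑ j, u j k = d k) ∧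
      (∀ j, ∑ k ∈ Finset.Icc 1 T, u j k ≤ x0 j)) ↔
    (∀ W ⊆ Finset.Icc 1 T, ∑ k ∈ W, d k ≤ ∑ j, min (W.card : ℝ) (x0 j)) := by
  constructor
  · rintro ⟨u, hu1, hu2, hu3⟩ W hWs
    have h1 : ∑ k ∈ W, d k = ∑ j, ∑ k ∈ W, u j k := by
      rw [Finset.sum_comm]
      apply Finset.sum_congr rfl
      intro k hk
      exact (hu2 k (hWs hk)).symm
    rw [h1]
    apply Finset.sum_le_sum
    intro j _
    apply le_min
    · calc ∑ k ∈ W, u j k ≤ ∑ k ∈ W, (1 : ℝ) :=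
        Finset.sum_le_sum fun k hk => (hu1 j k (hWs hk)).2
        _ = (W.card : ℝ) := by simp
    · have hst : ∑ k ∈ W, u j k ≤ ∑ k ∈ Finset.Icc 1 T, u j k :=
        Finset.sum_le_sum_of_subset_of_nonneg hWs (fun k hk _ => (hu1 j k hk).1)
      exact hst.trans (hu3 j)
  · exact discrete_homogeneous_sufficiency N d T x0 hx0 hd
end

section
/- (Finite-dimensional key identity for the GGDDF policy, case of full saturation.) Fix a finite index set N partitioned into nonempty level sets N_{τ_1},…,N_{τ_G} by distinct levels τ_1 > … > τ_G, rated powers P̄_j > 0, a subset S ⊆ N of 'available' devices, and d ≥ 0. Define K_j = P̄_j if j ∈ N_{τ_k} and ∑_{h≤k} ∑_{i∈N_{τ_h} ∩ S} P̄_i ≤ d; K_j = 0 if j ∈ N_{τ_k} and ∑_{h<k} ∑_{i∈N_{τ_h} ∩ S} P̄_i > d (ignoring the fractional case). Define similarly K̃_j with S replaced by N and d replaced by d̃ = d + ∑_{j∉S} K_j. Then for every index i whose level-index k satisfies ∑_{h≤k} ∑_{j∈N_{τ_h}∩S} P̄_j ≤ d, one has K̃_i(d̃) = P̄_i = K_i,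 i.e., ∑_{h≤k} ∑_{j∈N_{τ_h}} P̄_j ≤ d̃. -/
/-- Key identity for the GGDDF policy, full-saturation case: if the available power at
levels up to that of device `i` does not exceed `d`, then the total power at those
levels does not exceed the augmented demand `d̃ = d + ∑_{j∉S} K_j`; hence the
unconstrained priority policy also assigns full rated power to `i`. -/
theorem ggddf_key_identity_saturated
    {ι : Type*} [Fintype ι] [DecidableEq ι]
    (level : ι → ℕ) (P : ι → ℝ) (hP : ∀ j, 0 < P j)
    (S : Finset ι) (d : ℝ) (hd : 0 ≤ d) (K : ι → ℝ)
    (hK_nonneg : ∀ j, 0 ≤ K j)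
    (hK_full : ∀ j : ι,
      (∑ i ∈ Finset.univ.filter (fun i => level i ≤ level j ∧ i ∈ S), P i) ≤ d →
      K j = P j) :
    ∀ i : ι,
      (∑ j ∈ Finset.univ.filter (fun j => level j ≤ level i ∧ j ∈ S), P j) ≤ d →
      (∑ j ∈ Finset.univ.filter (fun j => level j ≤ level i), P j) ≤
        d + ∑ j ∈ Finset.univ.filter (fun j => j ∉ S), K j := by
  intro i hi
  -- split the sum over levels ≤ level i into j ∈ S and j ∉ S
  have hsplit :
      (∑ j ∈ Finset.univ.filter (fun j => level j ≤ level i), P j) =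
      (∑ j ∈ Finset.univ.filter (fun j => level j ≤ level i ∧ j ∈ S), P j) +
      (∑ j ∈ Finset.univ.filter (fun j => level j ≤ level i ∧ j ∉ S), P j) := by
    rw [← Finset.sum_union]
    · congr 1
      ext j
      simp only [Finset.mem_union, Finset.mem_filter, Finset.mem_univ, true_and]
      tauto
    · rw [Finset.disjoint_left]
      intro a ha hb
      simp only [Finset.mem_filter, Finset.mem_univ, true_and] at ha hb
      exact hb.2 ha.2
  -- for j ∉ S with level j ≤ level i, K j = P j
  have hKP : ∀ j ∈ Finset.univ.filter (fun j => level j ≤ level i ∧ j ∉ S),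
      P j ≤ K j := by
    intro j hj
    simp only [Finset.mem_filter, Finset.mem_univ, true_and] at hj
    have hsub : (Finset.univ.filter (fun k => level k ≤ level j ∧ k ∈ S)) ⊆
        (Finset.univ.filter (fun k => level k ≤ level i ∧ k ∈ S)) := by
      intro a ha
      simp only [Finset.mem_filter, Finset.mem_univ, true_and] at ha ⊢
      exact ⟨ha.1.trans hj.1, ha.2⟩
    have := hK_full j (le_trans (Finset.sum_le_sum_of_subset_of_nonneg hsub
      (fun a _ _ => (hP a).le)) hi)
    exact this.ge
  have h2 : (∑ j ∈ Finset.univ.filter (fun j => level j ≤ level i ∧ j ∉ S), P j) ≤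
      ∑ j ∈ Finset.univ.filter (fun j => j ∉ S), K j := by
    calc (∑ j ∈ Finset.univ.filter (fun j => level j ≤ level i ∧ j ∉ S), P j)
        ≤ ∑ j ∈ Finset.univ.filter (fun j => level j ≤ level i ∧ j ∉ S), K j :=
          Finset.sum_le_sum hKP
      _ ≤ ∑ j ∈ Finset.univ.filter (fun j => j ∉ S), K j := by
          apply Finset.sum_le_sum_of_subset_of_nonneg
          · intro a ha
            simp only [Finset.mem_filter, Finset.mem_univ, true_and] at ha ⊢
            exact ha.2
          · exact fun a _ _ => hK_nonneg a
  rw [hsplit]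
  linarith
end

section
/- (Finite-dimensional key identity, zero case.) In the setting of the previous statement, if i lies in level k with d < ∑_{h<k} ∑_{j∈N_{τ_h}∩S} P̄_j, and K_j = 0 for all j in levels h ≥ k, and 0 ≤ K_j ≤ P̄_j for all j in levels h < k, then d + ∑_{j∉S} K_j < ∑_{h<k} ∑_{j∈N_{τ_h}} P̄_j; hence the unconstrained priority policy at augmented demand d̃ = d + ∑_{j∉S} K_j also assigns 0 to device i. -/
/-- Key identity for the GGDDF policy, zero case: if the available power at levels
strictly above that of device `i` already exceeds `d`, and the policy assigns zero at
level of `i` and below, then the augmented demand `d + ∑_{j∉S} K_j` is still below the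
total power of the strictly higher-priority levels; hence the unconstrained priority
policy at the augmented demand also assigns `0` to device `i`. -/
theorem ggddf_key_identity_zero
    {ι : Type*} [Fintype ι] [DecidableEq ι]
    (level : ι → ℕ) (P : ι → ℝ) (hP : ∀ j, 0 < P j)
    (S : Finset ι) (d : ℝ) (hd : 0 ≤ d) (K Kt : ι → ℝ) (i : ι)
    (hlt : d < ∑ j ∈ Finset.univ.filter (fun j => level j < level i ∧ j ∈ S), P j)
    (hK_zero : ∀ j : ι, level i ≤ level j → K j = 0)
    (hK_bd : ∀ j : ι, level j < level i → 0 ≤ K j ∧ K j ≤ P j)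
    (hKt : (d + ∑ j ∈ Finset.univ.filter (fun j => j ∉ S), K j) <
        (∑ j ∈ Finset.univ.filter (fun j => level j < level i), P j) → Kt i = 0) :
    (d + ∑ j ∈ Finset.univ.filter (fun j => j ∉ S), K j) <
      (∑ j ∈ Finset.univ.filter (fun j => level j < level i), P j) ∧ Kt i = 0 := by
  have hmain : (d + ∑ j ∈ Finset.univ.filter (fun j => j ∉ S), K j) <
      (∑ j ∈ Finset.univ.filter (fun j => level j < level i), P j) := by
    have h1 : ∑ j ∈ Finset.univ.filter (fun j => j ∉ S), K j
        = ∑ j ∈ Finset.univ.filter (fun j => level j < level i ∧ j ∉ S), K j := by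
      apply (Finset.sum_subset ?_ ?_).symm
      · intro j hj
        simp only [Finset.mem_filter] at hj ⊢
        exact ⟨Finset.mem_univ j, hj.2.2⟩
      · intro j hj hj'
        simp only [Finset.mem_filter] at hj hj'
        exact hK_zero j (le_of_not_gt fun h => hj' ⟨Finset.mem_univ j, h, hj.2⟩)
    have h2 : ∑ j ∈ Finset.univ.filter (fun j => level j < level i ∧ j ∉ S), K j
        ≤ ∑ j ∈ Finset.univ.filter (fun j => level j < level i ∧ j ∉ S), P j := by
      apply Finset.sum_le_sum
      intro j hj
      simp only [Finset.mem_filter] at hj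
      exact (hK_bd j hj.2.1).2
    have h3 : (∑ j ∈ Finset.univ.filter (fun j => level j < level i ∧ j ∈ S), P j)
        + (∑ j ∈ Finset.univ.filter (fun j => level j < level i ∧ j ∉ S), P j)
        = ∑ j ∈ Finset.univ.filter (fun j => level j < level i), P j := by
      rw [← Finset.sum_union]
      · apply Finset.sum_congr _ (fun _ _ => rfl)
        ext j
        simp only [Finset.mem_union, Finset.mem_filter, Finset.mem_univ, true_and]
        tauto
      · rw [Finset.disjoint_left]
        intro j hj hj'
        simp only [Finset.mem_filter] at hj hj'
        exact hj'.2.2 hj.2.2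
    rw [h1, ← h3]
    exact add_lt_add_of_lt_of_le hlt h2
  exact ⟨hmain, hKt hmain⟩
end
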